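/- Let G = (V, E) be an undirected graph and G_p = (V, E_p) the random subgraph where each edge is kept independently with probability p ∈ (0, 1). Then with high probability (probability at least 1 − n^{-c} for a constant c), for every vertex v, core(G_p, v) ≤ (1 + ε)·p·core(G, v) + O(log n / ε). -/

import Mathlib

open Finset
open scoped NNRat Classical

/-- Degree of `u` inside `S` in the undirected graph with edge set `F`. -/
def edegIn {n : ℕ} (F : Finset (Sym2 (Fin n))) (S : Finset (Fin n)) (u : Fin n) : ℕ :=
  (S.filter fun w => w ≠ u ∧ s(u, w) ∈ F).card

/-- Minimum degree of the induced subgraph on `S`. -/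
def emindegIn {n : ℕ} (F : Finset (Sym2 (Fin n))) (S : Finset (Fin n)) : ℕ :=
  if h : S.Nonempty then S.inf' h (edegIn F S) else 0

/-- Coreness of `v` in the undirected graph with edge set `F`. -/
def coreE {n : ℕ} (F : Finset (Sym2 (Fin n))) (v : Fin n) : ℕ :=
  ((univ : Finset (Fin n)).powerset.filter fun S => v ∈ S).sup (emindegIn F)

/-- Density of the undirected graph with edge set `F`: the maximum over nonempty
`S` of `|F[S]| / |S|`. -/
def densE {n : ℕ} (F : Finset (Sym2 (Fin n))) : ℚ≥0 :=
  ((univ : Finset (Fin n)).powerset.filter fun S => S.Nonempty).sup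
    fun S => ((F ∩ S.sym2).card : ℚ≥0) / (S.card : ℚ≥0)

/-- Arboricity via Nash-Williams: `max` over `S` with `|S| ≥ 2` of `⌈|F[S]|/(|S|−1)⌉`. -/
def arbE {n : ℕ} (F : Finset (Sym2 (Fin n))) : ℕ :=
  ((univ : Finset (Fin n)).powerset.filter fun S => 2 ≤ S.card).sup
    fun S => ⌈((F ∩ S.sym2).card : ℚ) / ((S.card : ℚ) - 1)⌉₊

/-- The probability, when each edge of `E0` is kept independently with probability `p`,
that the resulting random edge subset satisfies `A`. -/
noncomputable def probE {n : ℕ} (E0 : Finset (Sym2 (Fin n))) (p : ℝ)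
    (A : Finset (Sym2 (Fin n)) → Prop) : ℝ :=
  ∑ F ∈ E0.powerset,
    if A F then p ^ F.card * (1 - p) ^ (E0.card - F.card) else 0

section Aux
variable {n : ℕ}

/-- A vertex of minimum degree (w.r.t. edge set `E0`) in a nonempty set `S`. -/
noncomputable def pickv (E0 : Finset (Sym2 (Fin n))) (S : Finset (Fin n)) (h : S.Nonempty) :
    Fin n :=
  (S.exists_mem_eq_inf' h (edegIn E0 S)).choose

lemma pickv_spec (E0 : Finset (Sym2 (Fin n))) (S : Finset (Fin n)) (h : S.Nonempty) :
    pickv E0 S h ∈ S ∧ S.inf' h (edegIn E0 S) = edegIn E0 S (pickv E0 S h) :=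
  (S.exists_mem_eq_inf' h (edegIn E0 S)).choose_spec

/-- The degeneracy (peeling) order: repeatedly remove a vertex of minimum degree. -/
noncomputable def peel (E0 : Finset (Sym2 (Fin n))) : ℕ → Finset (Fin n)
  | 0 => univ
  | (i+1) =>
    if h : (peel E0 i).Nonempty then peel E0 i \ {pickv E0 (peel E0 i) h} else ∅

/-- The set of `E0`-edges from the `i`-th peeled vertex into the `i`-th residual set. -/
noncomputable def EuE (E0 : Finset (Sym2 (Fin n))) (i : ℕ) : Finset (Sym2 (Fin n)) :=
  if h : (peel E0 i).Nonempty then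
    ((peel E0 i).filter fun w =>
        w ≠ pickv E0 (peel E0 i) h ∧ s(pickv E0 (peel E0 i) h, w) ∈ E0).image
      (fun w => s(pickv E0 (peel E0 i) h, w))
  else ∅

lemma EuE_eq (E0 : Finset (Sym2 (Fin n))) (i : ℕ) (h : (peel E0 i).Nonempty) :
    EuE E0 i = ((peel E0 i).filter fun w =>
        w ≠ pickv E0 (peel E0 i) h ∧ s(pickv E0 (peel E0 i) h, w) ∈ E0).image
      (fun w => s(pickv E0 (peel E0 i) h, w)) := by
  simp [EuE, dif_pos h]

lemma EuE_card (E0 : Finset (Sym2 (Fin n))) (i : ℕ) (h : (peel E0 i).Nonempty) :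
    (EuE E0 i).card = emindegIn E0 (peel E0 i) := by
  rw [EuE_eq E0 i h, Finset.card_image_of_injOn, emindegIn, dif_pos h, (pickv_spec E0 _ h).2]
  · rfl
  · intro a ha b hb hab
    simp only [coe_filter, Set.mem_setOf_eq] at ha hb
    exact Sym2.congr_right.1 hab

lemma EuE_subset (E0 : Finset (Sym2 (Fin n))) (i : ℕ) : EuE E0 i ⊆ E0 := by
  by_cases h : (peel E0 i).Nonempty
  · rw [EuE_eq E0 i h]
    intro e he
    simp only [mem_image, mem_filter] at he
    obtain ⟨w, ⟨_, _, hw⟩, rfl⟩ := he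
    exact hw
  · simp [EuE, dif_neg h]

lemma peel_card (E0 : Finset (Sym2 (Fin n))) (i : ℕ) : (peel E0 i).card ≤ n - i := by
  induction i with
  | zero => simp [peel]
  | succ i ih =>
    rw [peel]
    by_cases h : (peel E0 i).Nonempty
    · rw [dif_pos h, Finset.card_sdiff_of_subset (by simp [(pickv_spec E0 _ h).1])]
      simp only [card_singleton]
      omega
    · rw [dif_neg h]; simp

lemma peel_lt (E0 : Finset (Sym2 (Fin n))) (i : ℕ) (h : (peel E0 i).Nonempty) : i < n := by
  have := peel_card E0 i
  have := Finset.card_pos.2 h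
  omega

lemma exists_peel_index (E0 : Finset (Sym2 (Fin n))) (S : Finset (Fin n)) (hS : S.Nonempty) :
    ∃ i, ∃ h : (peel E0 i).Nonempty, S ⊆ peel E0 i ∧ pickv E0 (peel E0 i) h ∈ S := by
  have hQ : ∃ i, ¬ S ⊆ peel E0 i := by
    refine ⟨n, fun hsub => ?_⟩
    have h1 := peel_card E0 n
    have h2 := Finset.card_pos.2 hS
    have := Finset.card_le_card hsub
    omega
  classical
  have hi : ¬ S ⊆ peel E0 (Nat.find hQ) := Nat.find_spec hQ
  have hi0 : Nat.find hQ ≠ 0 := by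
    intro h0
    apply hi
    rw [h0]
    simp [peel]
  obtain ⟨j, hij⟩ : ∃ j, Nat.find hQ = j + 1 := ⟨Nat.find hQ - 1, by omega⟩
  rw [hij] at hi
  have hj : S ⊆ peel E0 j := by
    by_contra hc
    exact absurd (Nat.find_min hQ (by omega : j < Nat.find hQ)) (fun h => h hc)
  have hne : (peel E0 j).Nonempty := hS.mono hj
  refine ⟨j, hne, hj, ?_⟩
  obtain ⟨w, hwS, hw⟩ : ∃ w ∈ S, w ∉ peel E0 (j+1) := by
    by_contra hc
    push_neg at hc
    exact hi fun x hx => hc x hx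
  have : peel E0 (j+1) = peel E0 j \ {pickv E0 (peel E0 j) hne} := by
    simp [peel, dif_pos hne]
  rw [this] at hw
  simp only [mem_sdiff, mem_singleton, not_and, not_not] at hw
  rwa [← hw (hj hwS)]

/-- Deterministic core of the argument: if along the peeling order every forward
edge set intersects `F` in few edges, then all corenesses of `F` are small. -/
lemma det_core (E0 F : Finset (Sym2 (Fin n))) (hF : F ⊆ E0) (a lam : ℝ)
    (ha : 0 ≤ a) (hlam : 0 ≤ lam)
    (good : ∀ i, (peel E0 i).Nonempty →
      ((F ∩ EuE E0 i).card : ℝ) ≤ a * (emindegIn E0 (peel E0 i)) + lam)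
    (v : Fin n) :
    (coreE F v : ℝ) ≤ a * (coreE E0 v) + lam := by
  have hvmem : ({v} : Finset (Fin n)) ∈
      ((univ : Finset (Fin n)).powerset.filter fun S => v ∈ S) := by simp
  obtain ⟨S, hSmem, hSeq⟩ := Finset.exists_mem_eq_sup _ ⟨_, hvmem⟩ (emindegIn F)
  rw [coreE, hSeq]
  simp only [mem_filter, mem_powerset] at hSmem
  obtain ⟨hSuniv, hvS⟩ := hSmem
  have hSne : S.Nonempty := ⟨v, hvS⟩
  obtain ⟨i, hpe, hSsub, humem⟩ := exists_peel_index E0 S hSne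
  set u := pickv E0 (peel E0 i) hpe with hu
  have h1 : emindegIn F S ≤ edegIn F S u := by
    rw [emindegIn, dif_pos hSne]
    exact Finset.inf'_le _ humem
  have h2 : edegIn F S u ≤ (F ∩ EuE E0 i).card := by
    rw [edegIn]
    apply Finset.card_le_card_of_injOn (fun w => s(u, w))
    · intro w hw
      simp only [Finset.mem_coe, mem_filter] at hw ⊢
      obtain ⟨hwS, hwu, hwF⟩ := hw
      rw [mem_inter]
      refine ⟨hwF, ?_⟩
      rw [EuE_eq E0 i hpe]
      exact mem_image_of_mem _ (by
        simp only [mem_filter]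
        exact ⟨hSsub hwS, hwu, hF hwF⟩)
    · intro x hx y hy hxy
      exact Sym2.congr_right.1 hxy
  have h3 : emindegIn E0 (peel E0 i) ≤ coreE E0 v := by
    apply Finset.le_sup
    simp only [mem_filter, mem_powerset]
    exact ⟨subset_univ _, hSsub hvS⟩
  have h4 := good i hpe
  have hc1 : (emindegIn F S : ℝ) ≤ ((F ∩ EuE E0 i).card : ℝ) := by
    exact_mod_cast le_trans h1 h2
  calc (emindegIn F S : ℝ) ≤ a * (emindegIn E0 (peel E0 i)) + lam := le_trans hc1 h4
    _ ≤ a * (coreE E0 v) + lam := by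
        have : (emindegIn E0 (peel E0 i) : ℝ) ≤ (coreE E0 v : ℝ) := by exact_mod_cast h3
        nlinarith

lemma master_sum (E0 D : Finset (Sym2 (Fin n))) (hD : D ⊆ E0) (p x : ℝ) :
    ∑ F ∈ E0.powerset, p ^ F.card * (1 - p) ^ (E0.card - F.card) * x ^ (F ∩ D).card
      = (p * x + (1 - p)) ^ D.card := by
  have key := Finset.prod_add (fun e => if e ∈ D then p * x else p) (fun _ => (1 - p)) E0
  have lhs : ∏ e ∈ E0, ((if e ∈ D then p * x else p) + (1 - p))
      = (p * x + (1 - p)) ^ D.card := by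
    have : ∀ e ∈ E0, ((if e ∈ D then p * x else p) + (1 - p))
        = (if e ∈ D then (p * x + (1 - p)) else (p + (1 - p))) := by
      intro e _; by_cases h : e ∈ D <;> simp [h]
    rw [Finset.prod_congr rfl this, Finset.prod_ite, Finset.prod_const, Finset.prod_const,
      Finset.filter_mem_eq_inter, Finset.inter_eq_right.2 hD]
    have : p + (1 - p) = 1 := by ring
    rw [this, one_pow, mul_one]
  rw [lhs] at key
  rw [key]
  apply Finset.sum_congr rfl
  intro F hF
  rw [Finset.mem_powerset] at hF
  have h1 : ∏ e ∈ F, (if e ∈ D then p * x else p)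
      = p ^ F.card * x ^ (F ∩ D).card := by
    rw [Finset.prod_ite, Finset.prod_const, Finset.prod_const, Finset.filter_mem_eq_inter]
    have hcard : (Finset.filter (fun e => ¬ e ∈ D) F).card = F.card - (F ∩ D).card := by
      rw [Finset.filter_not, Finset.filter_mem_eq_inter, Finset.card_sdiff_of_subset inter_subset_left]
    rw [hcard, mul_pow]
    have hle : (F ∩ D).card ≤ F.card := Finset.card_le_card inter_subset_left
    rw [mul_comm (p ^ (F ∩ D).card) (x ^ (F ∩ D).card), mul_assoc, ← pow_add]
    rw [Nat.add_sub_cancel' hle, mul_comm]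
  have h2 : ∏ _e ∈ E0 \ F, (1 - p) = (1 - p) ^ (E0.card - F.card) := by
    rw [Finset.prod_const, Finset.card_sdiff_of_subset hF]
  rw [h1, h2]; ring

lemma total_sum (E0 : Finset (Sym2 (Fin n))) (p : ℝ) :
    ∑ F ∈ E0.powerset, p ^ F.card * (1 - p) ^ (E0.card - F.card) = 1 := by
  have := master_sum E0 ∅ (Finset.empty_subset _) p 1
  simpa using this

lemma weight_nonneg (E0 F : Finset (Sym2 (Fin n))) (p : ℝ) (hp0 : 0 ≤ p) (hp1 : p ≤ 1) :
    0 ≤ p ^ F.card * (1 - p) ^ (E0.card - F.card) :=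
  mul_nonneg (pow_nonneg hp0 _) (pow_nonneg (by linarith) _)

lemma probE_nonneg (E0 : Finset (Sym2 (Fin n))) (p : ℝ) (hp0 : 0 ≤ p) (hp1 : p ≤ 1)
    (A : Finset (Sym2 (Fin n)) → Prop) : 0 ≤ probE E0 p A := by
  apply Finset.sum_nonneg
  intro F _
  split
  · exact weight_nonneg E0 F p hp0 hp1
  · exact le_refl 0

lemma probE_compl (E0 : Finset (Sym2 (Fin n))) (p : ℝ)
    (A : Finset (Sym2 (Fin n)) → Prop) :
    probE E0 p A = 1 - probE E0 p (fun F => ¬ A F) := by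
  have h : probE E0 p A + probE E0 p (fun F => ¬ A F)
      = ∑ F ∈ E0.powerset, p ^ F.card * (1 - p) ^ (E0.card - F.card) := by
    rw [probE, probE, ← Finset.sum_add_distrib]
    apply Finset.sum_congr rfl
    intro F _
    by_cases h : A F
    · rw [if_pos h, if_neg (not_not_intro h), add_zero]
    · rw [if_neg h, if_pos h, zero_add]
  rw [total_sum E0 p] at h
  linarith

lemma probE_le_sum (E0 : Finset (Sym2 (Fin n))) (p : ℝ) (hp0 : 0 ≤ p) (hp1 : p ≤ 1)
    (A : Finset (Sym2 (Fin n)) → Prop) (m : ℕ) (B : ℕ → Finset (Sym2 (Fin n)) → Prop)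
    (h : ∀ F, F ⊆ E0 → A F → ∃ i, i < m ∧ B i F) :
    probE E0 p A ≤ ∑ i ∈ Finset.range m, probE E0 p (B i) := by
  have hcomm : ∑ i ∈ Finset.range m, probE E0 p (B i)
      = ∑ F ∈ E0.powerset, ∑ i ∈ Finset.range m,
          (if B i F then p ^ F.card * (1 - p) ^ (E0.card - F.card) else 0) :=
    Finset.sum_comm
  rw [hcomm, probE]
  · apply Finset.sum_le_sum
    intro F hF
    rw [Finset.mem_powerset] at hF
    by_cases hA : A F
    · rw [if_pos hA]
      obtain ⟨i, him, hBi⟩ := h F hF hA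
      have : (if B i F then p ^ F.card * (1 - p) ^ (E0.card - F.card) else 0)
          = p ^ F.card * (1 - p) ^ (E0.card - F.card) := if_pos hBi
      calc p ^ F.card * (1 - p) ^ (E0.card - F.card)
          = (if B i F then p ^ F.card * (1 - p) ^ (E0.card - F.card) else 0) := this.symm
        _ ≤ ∑ i ∈ Finset.range m,
              (if B i F then p ^ F.card * (1 - p) ^ (E0.card - F.card) else 0) := by
            apply Finset.single_le_sum (f := fun i =>
              (if B i F then p ^ F.card * (1 - p) ^ (E0.card - F.card) else 0))
            · intro j _
              split
              · exact weight_nonneg E0 F p hp0 hp1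
              · exact le_refl 0
            · exact Finset.mem_range.2 him
    · rw [if_neg hA]
      apply Finset.sum_nonneg
      intro j _
      split
      · exact weight_nonneg E0 F p hp0 hp1
      · exact le_refl 0

lemma probE_tail (E0 D : Finset (Sym2 (Fin n))) (hD : D ⊆ E0) (p : ℝ)
    (hp0 : 0 ≤ p) (hp1 : p ≤ 1) (x τ : ℝ) (hx : 1 ≤ x) (hτ : 0 ≤ τ) :
    probE E0 p (fun F => τ < ((F ∩ D).card : ℝ))
      ≤ x ^ (-τ) * (p * x + (1 - p)) ^ D.card := by
  have hx0 : (0:ℝ) < x := lt_of_lt_of_le one_pos hx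
  have step : probE E0 p (fun F => τ < ((F ∩ D).card : ℝ))
      ≤ ∑ F ∈ E0.powerset,
          x ^ (-τ) * (p ^ F.card * (1 - p) ^ (E0.card - F.card) * x ^ (F ∩ D).card) := by
    apply Finset.sum_le_sum
    intro F _
    by_cases h : τ < ((F ∩ D).card : ℝ)
    · rw [if_pos h]
      have hone : (1:ℝ) ≤ x ^ (-τ) * x ^ (F ∩ D).card := by
        rw [← Real.rpow_natCast x (F ∩ D).card, ← Real.rpow_add hx0]
        apply Real.one_le_rpow hx
        linarith
      have hw := weight_nonneg E0 F p hp0 hp1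
      calc p ^ F.card * (1 - p) ^ (E0.card - F.card)
          = p ^ F.card * (1 - p) ^ (E0.card - F.card) * 1 := by ring
        _ ≤ p ^ F.card * (1 - p) ^ (E0.card - F.card) * (x ^ (-τ) * x ^ (F ∩ D).card) := by
            exact mul_le_mul_of_nonneg_left hone hw
        _ = x ^ (-τ) * (p ^ F.card * (1 - p) ^ (E0.card - F.card) * x ^ (F ∩ D).card) := by
            ring
    · rw [if_neg h]
      have hw := weight_nonneg E0 F p hp0 hp1
      have : (0:ℝ) ≤ x ^ (F ∩ D).card := pow_nonneg (le_of_lt hx0) _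
      positivity
  calc probE E0 p (fun F => τ < ((F ∩ D).card : ℝ))
      ≤ _ := step
    _ = x ^ (-τ) * (p * x + (1 - p)) ^ D.card := by
        rw [← Finset.mul_sum, master_sum E0 D hD p x]

end Aux

/-- Sampling each edge independently with probability `p`, with high probability every
vertex satisfies `core(G_p, v) ≤ (1 + ε)·p·core(G, v) + O(log n / ε)`. -/
theorem core_sample_upper_whp :
    ∃ C c : ℝ, 0 < C ∧ 0 < c ∧
      ∀ (n : ℕ) (G : SimpleGraph (Fin n)) [DecidableRel G.Adj] (p ε : ℝ),
        0 < p → p < 1 → 0 < ε → ε < 1 →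
        1 - (n : ℝ) ^ (-c) ≤
          probE G.edgeFinset p (fun F => ∀ v : Fin n,
            (coreE F v : ℝ) ≤ (1 + ε) * p * (coreE G.edgeFinset v : ℝ)
              + C * Real.log n / ε) := by
  refine ⟨100, 1, by norm_num, by norm_num, ?_⟩
  intro n G _ p ε hp0 hp1 he0 he1
  set E0 := G.edgeFinset with hE0
  set lam := (100 : ℝ) * Real.log n / ε with hlamdef
  by_cases hn : n = 0
  · subst hn
    have hA : probE E0 p (fun F => ∀ v : Fin 0,
        (coreE F v : ℝ) ≤ (1 + ε) * p * (coreE E0 v : ℝ) + lam) = 1 := by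
      rw [probE]
      exact (Finset.sum_congr rfl (fun F _ => if_pos (fun v => Fin.elim0 v))).trans
        (total_sum E0 p)
    rw [hA]
    have hz : ((0:ℕ) : ℝ) ^ (-(1:ℝ)) = 0 := by
      rw [Nat.cast_zero, Real.zero_rpow (by norm_num)]
    rw [hz]
    norm_num
  · have hn1 : 1 ≤ n := Nat.one_le_iff_ne_zero.2 hn
    have hncast : (1:ℝ) ≤ (n:ℝ) := by exact_mod_cast hn1
    have hnpos : (0:ℝ) < (n:ℝ) := by linarith
    have hlog : 0 ≤ Real.log n := Real.log_nonneg hncast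
    have hlam : 0 ≤ lam := by
      rw [hlamdef]; positivity
    set Bad : ℕ → Finset (Sym2 (Fin n)) → Prop := fun i F =>
      (1 + ε) * p * ((emindegIn E0 (peel E0 i) : ℕ) : ℝ) + lam < (((F ∩ EuE E0 i).card : ℕ) : ℝ)
      with hBaddef
    -- Step C: each bad event has probability at most n^(-50)
    have stepC : ∀ i, probE E0 p (Bad i) ≤ (n:ℝ) ^ (-(50:ℝ)) := by
      intro i
      by_cases hpe : (peel E0 i).Nonempty
      · have hd : ((EuE E0 i).card : ℝ) = ((emindegIn E0 (peel E0 i) : ℕ) : ℝ) := by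
          rw [EuE_card E0 i hpe]
        set δ := ((emindegIn E0 (peel E0 i) : ℕ) : ℝ) with hδ
        have hδ0 : 0 ≤ δ := Nat.cast_nonneg _
        set τ := (1 + ε) * p * δ + lam with hτdef
        have hτ0 : 0 ≤ τ := by
          have : 0 ≤ (1 + ε) * p * δ := by positivity
          rw [hτdef]; linarith
        have tail := probE_tail E0 (EuE E0 i) (EuE_subset E0 i) p hp0.le hp1.le
          (1 + ε) τ (by linarith) hτ0
        have heq : probE E0 p (Bad i)
            = probE E0 p (fun F => τ < ((F ∩ EuE E0 i).card : ℝ)) := rfl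
        rw [heq]
        refine le_trans tail ?_
        -- numeric estimate
        have h1e : (0:ℝ) < 1 + ε := by linarith
        have e1 : p * (1 + ε) + (1 - p) = 1 + ε * p := by ring
        have hdcard : ((EuE E0 i).card : ℝ) = δ := hd
        have e2 : (p * (1 + ε) + (1 - p)) ^ (EuE E0 i).card
            ≤ Real.exp ((EuE E0 i).card * (ε * p)) := by
          rw [e1, Real.exp_nat_mul]
          apply pow_le_pow_left₀ (by nlinarith)
          have := Real.add_one_le_exp (ε * p)
          linarith
        have e3 : ((1 + ε) : ℝ) ^ (-τ) = Real.exp (Real.log (1 + ε) * (-τ)) :=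
          Real.rpow_def_of_pos h1e _
        have e4 : ε / (1 + ε) ≤ Real.log (1 + ε) := by
          have h := Real.log_le_sub_one_of_pos (show (0:ℝ) < (1 + ε)⁻¹ by positivity)
          rw [Real.log_inv] at h
          have heq2 : ε / (1 + ε) = 1 - (1 + ε)⁻¹ := by field_simp; ring
          linarith
        have e5 : Real.log (1 + ε) * (-τ) ≤ (ε / (1 + ε)) * (-τ) := by
          have hτneg : -τ ≤ 0 := by linarith
          exact mul_le_mul_of_nonpos_right e4 hτneg
        have hmulbd : ((1 + ε) : ℝ) ^ (-τ) * (p * (1 + ε) + (1 - p)) ^ (EuE E0 i).card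
            ≤ Real.exp ((ε / (1 + ε)) * (-τ)) * Real.exp ((EuE E0 i).card * (ε * p)) := by
          apply mul_le_mul
          · rw [e3]; exact Real.exp_le_exp.2 e5
          · exact e2
          · apply pow_nonneg; nlinarith
          · exact Real.exp_nonneg _
        rw [← Real.exp_add] at hmulbd
        refine le_trans hmulbd ?_
        have hexp : (ε / (1 + ε)) * (-τ) + ((EuE E0 i).card : ℝ) * (ε * p)
            = -(100 * Real.log n / (1 + ε)) := by
          rw [hdcard, hτdef, hlamdef]
          field_simp
          ring
        rw [hexp]
        have e7 : 50 * Real.log n ≤ 100 * Real.log n / (1 + ε) := by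
          rw [le_div_iff₀ h1e]
          nlinarith
        have e8 : Real.exp (-(50 * Real.log n)) = (n:ℝ) ^ (-(50:ℝ)) := by
          rw [Real.rpow_def_of_pos hnpos]
          ring_nf
        rw [← e8]
        apply Real.exp_le_exp.2
        linarith
      · have hEuE : EuE E0 i = ∅ := by simp [EuE, dif_neg hpe]
        have hzero : probE E0 p (Bad i) = 0 := by
          rw [probE]
          apply Finset.sum_eq_zero
          intro F _
          rw [if_neg]
          rw [hBaddef]
          simp only [hEuE, Finset.inter_empty, Finset.card_empty, Nat.cast_zero, not_lt]
          have : 0 ≤ (1 + ε) * p * ((emindegIn E0 (peel E0 i) : ℕ) : ℝ) := by positivity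
          linarith
        rw [hzero]
        exact Real.rpow_nonneg (le_of_lt hnpos) _
    -- Step B: union bound
    have stepB : probE E0 p (fun F => ¬ ∀ v : Fin n,
        (coreE F v : ℝ) ≤ (1 + ε) * p * (coreE E0 v : ℝ) + 100 * Real.log n / ε)
        ≤ ∑ i ∈ Finset.range n, probE E0 p (Bad i) := by
      apply probE_le_sum E0 p hp0.le hp1.le _ n Bad
      intro F hF hA
      by_contra hc
      push_neg at hc
      apply hA
      intro v
      have := det_core E0 F hF ((1 + ε) * p) lam (by positivity) hlam ?_ v
      · rw [hlamdef] at this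
        exact this
      · intro i hpe
        have hlt := peel_lt E0 i hpe
        have := hc i hlt
        rw [hBaddef] at this
        simp only [not_lt] at this
        exact this
    -- Step D
    have stepD : ∑ i ∈ Finset.range n, probE E0 p (Bad i) ≤ (n:ℝ) ^ (-(1:ℝ)) := by
      calc ∑ i ∈ Finset.range n, probE E0 p (Bad i)
          ≤ ∑ _i ∈ Finset.range n, (n:ℝ) ^ (-(50:ℝ)) :=
            Finset.sum_le_sum (fun i _ => stepC i)
        _ = (n:ℝ) * (n:ℝ) ^ (-(50:ℝ)) := by
            rw [Finset.sum_const, Finset.card_range, nsmul_eq_mul]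
        _ = (n:ℝ) ^ ((1:ℝ) + -(50:ℝ)) := by
            rw [Real.rpow_add hnpos, Real.rpow_one]
        _ ≤ (n:ℝ) ^ (-(1:ℝ)) := by
            apply Real.rpow_le_rpow_of_exponent_le hncast
            norm_num
    have hcompl := probE_compl E0 p (fun F => ∀ v : Fin n,
        (coreE F v : ℝ) ≤ (1 + ε) * p * (coreE E0 v : ℝ) + 100 * Real.log n / ε)
    rw [hcompl]
    have := le_trans stepB stepD
    linarith
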